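/- arXiv:0707.3866 — 2 statements merged into one kernel-verified Lean document; each statement's English description precedes it below -/
import Mathlib

section
/- The jump times of the process U are exhausted by the countable family of stopping-time pairs: define for x > 0 and n ≥ 1, T_1^x = inf{t : U_t > x}, S_n^x = inf{t > T_n^x : U_t = 0}, T_{n+1}^x = inf{t > S_n^x : U_t > x}. Then the set of jump times D = {t > 0 : ΔU_t ≠ 0} satisfies D = ⋃_{x ∈ ℚ, x>0} ⋃_{n≥1} {S_n^x}. -/
open Set Function Topology Filter

namespace JumpAux

/-- Bundle of the structural assumptions on `M` and `U` that we actually need. -/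
structure Hyp (M : Set ℝ) (U : ℝ → ℝ) : Prop where
  closed : IsClosed M
  zero_mem : (0:ℝ) ∈ M
  subset : M ⊆ Set.Ici 0
  hU : ∀ t, U t = t - sSup (M ∩ Set.Icc 0 t)

variable {M : Set ℝ} {U : ℝ → ℝ}

lemma isGreatest_g (h : Hyp M U) {t : ℝ} (ht : 0 ≤ t) :
    IsGreatest (M ∩ Set.Icc 0 t) (sSup (M ∩ Set.Icc 0 t)) := by
  have hne : (M ∩ Set.Icc 0 t).Nonempty := ⟨0, h.zero_mem, le_refl 0, ht⟩
  have hbdd : BddAbove (M ∩ Set.Icc 0 t) := ⟨t, fun y hy => hy.2.2⟩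
  have hcl : IsClosed (M ∩ Set.Icc 0 t) := h.closed.inter isClosed_Icc
  exact ⟨hcl.csSup_mem hne hbdd, fun y hy => le_csSup hbdd hy⟩

lemma g_mem (h : Hyp M U) {t : ℝ} (ht : 0 ≤ t) : sSup (M ∩ Set.Icc 0 t) ∈ M :=
  (isGreatest_g h ht).1.1

lemma g_nonneg (h : Hyp M U) {t : ℝ} (ht : 0 ≤ t) : 0 ≤ sSup (M ∩ Set.Icc 0 t) :=
  (isGreatest_g h ht).1.2.1

lemma g_le (h : Hyp M U) {t : ℝ} (ht : 0 ≤ t) : sSup (M ∩ Set.Icc 0 t) ≤ t :=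
  (isGreatest_g h ht).1.2.2

lemma g_ge (h : Hyp M U) {t m : ℝ} (ht : 0 ≤ t) (hm : m ∈ M) (hmt : m ≤ t) :
    m ≤ sSup (M ∩ Set.Icc 0 t) :=
  (isGreatest_g h ht).2 ⟨hm, h.subset hm, hmt⟩

lemma U_nonneg (h : Hyp M U) {t : ℝ} (ht : 0 ≤ t) : 0 ≤ U t := by
  rw [h.hU]; linarith [g_le h ht]

lemma U_le (h : Hyp M U) {t m : ℝ} (ht : 0 ≤ t) (hm : m ∈ M) (hmt : m ≤ t) :
    U t ≤ t - m := by
  rw [h.hU]; linarith [g_ge h ht hm hmt]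

lemma U_eq_zero_of_mem (h : Hyp M U) {t : ℝ} (hm : t ∈ M) : U t = 0 := by
  have ht : 0 ≤ t := h.subset hm
  have : sSup (M ∩ Set.Icc 0 t) = t :=
    le_antisymm (g_le h ht) (g_ge h ht hm le_rfl)
  rw [h.hU, this]; ring

lemma mem_of_U_eq_zero (h : Hyp M U) {t : ℝ} (ht : 0 ≤ t) (h0 : U t = 0) : t ∈ M := by
  have : sSup (M ∩ Set.Icc 0 t) = t := by rw [h.hU] at h0; linarith
  have := g_mem h ht
  rwa [‹sSup (M ∩ Set.Icc 0 t) = t›] at this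

lemma g_eq_of_gap (h : Hyp M U) {a s : ℝ} (haM : a ∈ M) (has : a ≤ s)
    (hgap : Set.Ioc a s ∩ M = ∅) : sSup (M ∩ Set.Icc 0 s) = a := by
  refine IsGreatest.csSup_eq ⟨⟨haM, h.subset haM, has⟩, fun y hy => ?_⟩
  by_contra hya
  push_neg at hya
  exact absurd (Set.mem_inter (Set.mem_Ioc.2 ⟨hya, hy.2.2⟩) hy.1) (by rw [hgap]; exact notMem_empty y)

lemma U_eq_of_gap (h : Hyp M U) {a s : ℝ} (haM : a ∈ M) (has : a ≤ s)
    (hgap : Set.Ioc a s ∩ M = ∅) : U s = s - a := by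
  rw [h.hU, g_eq_of_gap h haM has hgap]

lemma leftLim_eq_gap (h : Hyp M U) {a t : ℝ} (haM : a ∈ M) (hat : a < t)
    (hgap : Set.Ioo a t ∩ M = ∅) : Function.leftLim U t = t - a := by
  have hne : (𝓝[<] t).NeBot := inferInstance
  apply leftLim_eq_of_tendsto
  have hmem : Set.Ioo a t ∈ 𝓝[<] t := Ioo_mem_nhdsLT_of_mem ⟨hat, le_refl t⟩
  have heq : ∀ s ∈ Set.Ioo a t, U s = s - a := by
    intro s hs
    apply U_eq_of_gap h haM hs.1.le
    apply Set.eq_empty_of_subset_empty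
    intro y hy
    rw [← hgap]
    exact ⟨⟨hy.1.1, lt_of_le_of_lt hy.1.2 hs.2⟩, hy.2⟩
  have : Filter.Tendsto (fun s => s - a) (𝓝[<] t) (𝓝 (t - a)) :=
    ((continuous_id.sub continuous_const).tendsto t).mono_left nhdsWithin_le_nhds
  apply this.congr'
  filter_upwards [hmem] with s hs
  exact (heq s hs).symm

lemma jump_of_gap (h : Hyp M U) {t : ℝ} (htM : t ∈ M) (a : ℝ) (ha0 : 0 ≤ a)
    (hat : a < t) (hgap : Set.Ioo a t ∩ M = ∅) :
    0 < t ∧ U t ≠ Function.leftLim U t := by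
  set a' := sSup (M ∩ Set.Icc 0 a) with ha'
  have ha'M : a' ∈ M := g_mem h ha0
  have ha'le : a' ≤ a := g_le h ha0
  have hgap' : Set.Ioo a' t ∩ M = ∅ := by
    apply Set.eq_empty_of_subset_empty
    rintro m ⟨⟨hm1, hm2⟩, hmM⟩
    rcases le_or_gt m a with hma | hma
    · exact absurd (g_ge h ha0 hmM hma) (not_le.2 hm1)
    · exact absurd (Set.mem_inter (Set.mem_Ioo.2 ⟨hma, hm2⟩) hmM) (by rw [hgap]; exact notMem_empty m)
  have hlt : a' < t := lt_of_le_of_lt ha'le hat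
  have hL : Function.leftLim U t = t - a' := leftLim_eq_gap h ha'M hlt hgap'
  have hU0 : U t = 0 := U_eq_zero_of_mem h htM
  refine ⟨lt_of_le_of_lt ha0 hat, ?_⟩
  rw [hU0, hL]
  intro hcontr
  linarith

lemma gap_of_jump (h : Hyp M U) {t : ℝ} (ht : 0 < t)
    (hjump : U t ≠ Function.leftLim U t) :
    t ∈ M ∧ ∃ a, a ∈ M ∧ 0 ≤ a ∧ a < t ∧ Set.Ioo a t ∩ M = ∅ := by
  by_cases hcl : t ∈ closure (M ∩ Set.Ico 0 t)
  · exfalso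
    have htM : t ∈ M := by
      have := closure_mono (Set.inter_subset_left) hcl
      rwa [h.closed.closure_eq] at this
    have hU0 : U t = 0 := U_eq_zero_of_mem h htM
    have htend : Filter.Tendsto U (𝓝[<] t) (𝓝 0) := by
      rw [Metric.tendsto_nhdsWithin_nhds]
      intro ε hε
      rw [Metric.mem_closure_iff] at hcl
      obtain ⟨m, ⟨hmM, hm0, hmt⟩, hdist⟩ := hcl ε hε
      refine ⟨t - m, by linarith, fun s hs hds => ?_⟩
      have hsm : m < s := by
        rw [Real.dist_eq, abs_of_nonpos (by simp at hs; linarith)] at hds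
        linarith
      have hs0 : 0 ≤ s := le_of_lt (lt_of_le_of_lt hm0 hsm)
      have h1 : U s ≤ s - m := U_le h hs0 hmM hsm.le
      have h2 : 0 ≤ U s := U_nonneg h hs0
      have htm : t - m < ε := by
        rw [Real.dist_eq, abs_of_nonneg (by linarith)] at hdist
        linarith
      rw [Real.dist_eq, sub_zero, abs_of_nonneg h2]
      have : s < t := hs
      linarith
    have hne : (𝓝[<] t).NeBot := inferInstance
    have : Function.leftLim U t = 0 := leftLim_eq_of_tendsto htend
    exact hjump (by rw [hU0, this])
  · set a := sSup (M ∩ Set.Ico 0 t) with hadef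
    have hne : (M ∩ Set.Ico 0 t).Nonempty := ⟨0, h.zero_mem, le_refl 0, ht⟩
    have hbdd : BddAbove (M ∩ Set.Ico 0 t) := ⟨t, fun y hy => hy.2.2.le⟩
    have hacl : a ∈ closure (M ∩ Set.Ico 0 t) := csSup_mem_closure hne hbdd
    have haMI : a ∈ M ∩ Set.Icc 0 t := by
      have h1 : closure (M ∩ Set.Ico 0 t) ⊆ M ∩ Set.Icc 0 t := by
        have : IsClosed (M ∩ Set.Icc 0 t) := h.closed.inter isClosed_Icc
        refine closure_minimal ?_ this
        exact Set.inter_subset_inter_right M Set.Ico_subset_Icc_self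
      exact h1 hacl
    have hat : a < t := lt_of_le_of_ne haMI.2.2 (fun he => hcl (he ▸ hacl))
    have hgap : Set.Ioo a t ∩ M = ∅ := by
      apply Set.eq_empty_of_subset_empty
      rintro m ⟨⟨hm1, hm2⟩, hmM⟩
      have : m ≤ a := le_csSup hbdd ⟨hmM, le_trans haMI.2.1 hm1.le, hm2⟩
      linarith
    have htM : t ∈ M := by
      by_contra htM
      have hgap2 : Set.Ioc a t ∩ M = ∅ := by
        apply Set.eq_empty_of_subset_empty
        rintro m ⟨⟨hm1, hm2⟩, hmM⟩
        rcases eq_or_lt_of_le hm2 with he | hlt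
        · exact htM (he ▸ hmM)
        · exact absurd (Set.mem_inter (Set.mem_Ioo.2 ⟨hm1, hlt⟩) hmM) (by rw [hgap]; exact notMem_empty m)
      have h1 : U t = t - a := U_eq_of_gap h haMI.1 hat.le hgap2
      have h2 : Function.leftLim U t = t - a := leftLim_eq_gap h haMI.1 hat hgap
      exact hjump (h1.trans h2.symm)
    exact ⟨htM, a, haMI.1, haMI.2.1, hat, hgap⟩

/-! ### The family of "big-gap" right endpoints -/

/-- Right endpoints of gaps of `M` of length `> x`. -/
def E (M : Set ℝ) (x : ℝ) : Set ℝ :=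
  {b | b ∈ M ∧ ∃ a, a ∈ M ∧ 0 ≤ a ∧ a + x < b ∧ Set.Ioo a b ∩ M = ∅}

lemma E_witness_unique {x b a₁ a₂ : ℝ}
    (h₁ : a₁ ∈ M ∧ 0 ≤ a₁ ∧ a₁ + x < b ∧ Set.Ioo a₁ b ∩ M = ∅)
    (h₂ : a₂ ∈ M ∧ 0 ≤ a₂ ∧ a₂ + x < b ∧ Set.Ioo a₂ b ∩ M = ∅)
    (hx : 0 < x) : a₁ = a₂ := by
  have key : ∀ c d : ℝ, c ∈ M → 0 ≤ c → c + x < b → d ∈ M → d + x < b →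
      Set.Ioo c b ∩ M = ∅ → d ≤ c := by
    intro c d hcM hc0 hcb hdM hdb hgap
    by_contra hdc
    push_neg at hdc
    have hmem : d ∈ Set.Ioo c b ∩ M := ⟨Set.mem_Ioo.2 ⟨hdc, by linarith⟩, hdM⟩
    rw [hgap] at hmem
    exact hmem
  exact le_antisymm (key a₂ a₁ h₂.1 h₂.2.1 h₂.2.2.1 h₁.1 h₁.2.2.1 h₂.2.2.2)
    (key a₁ a₂ h₁.1 h₁.2.1 h₁.2.2.1 h₂.1 h₂.2.2.1 h₁.2.2.2)

lemma E_pos {x b : ℝ} (hb : b ∈ E M x) : x < b := by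
  obtain ⟨-, a, -, ha0, hab, -⟩ := hb
  linarith

lemma E_sep {x b₁ b₂ : ℝ} (h₁ : b₁ ∈ E M x) (h₂ : b₂ ∈ E M x) (hlt : b₁ < b₂) :
    b₁ + x < b₂ := by
  obtain ⟨h₁M, -⟩ := h₁
  obtain ⟨-, a₂, ha₂M, ha₂0, ha₂b, hgap₂⟩ := h₂
  have hb₁a₂ : b₁ ≤ a₂ := by
    by_contra hc
    push_neg at hc
    exact absurd (Set.mem_inter (Set.mem_Ioo.2 ⟨hc, hlt⟩) h₁M) (by rw [hgap₂]; exact notMem_empty b₁)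
  linarith

lemma E_finite {x : ℝ} (hx : 0 < x) (R : ℝ) : (E M x ∩ Set.Iio R).Finite := by
  apply Set.Finite.of_finite_image (f := fun b => ⌊b / x⌋)
  · apply Set.Finite.subset (Set.finite_Icc (0 : ℤ) ⌈R / x⌉)
    rintro z ⟨b, ⟨hbE, hbR⟩, rfl⟩
    constructor
    · have : (0:ℝ) ≤ b / x := div_nonneg (le_of_lt (lt_trans hx (E_pos hbE))) hx.le
      exact Int.floor_nonneg.2 this
    · calc (⌊b / x⌋ : ℤ) ≤ ⌊R / x⌋ := Int.floor_mono (by gcongr; exact hbR.le)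
      _ ≤ ⌈R / x⌉ := Int.floor_le_ceil _
  · rintro b₁ ⟨h₁, -⟩ b₂ ⟨h₂, -⟩ hfe
    by_contra hne
    have key : ∀ c d : ℝ, c ∈ E M x → d ∈ E M x → c < d → ⌊c / x⌋ < ⌊d / x⌋ := by
      intro c d hc hd hcd
      have hsep := E_sep hc hd hcd
      have h2 : (c + x) / x ≤ d / x := by gcongr
      rw [add_div, div_self hx.ne'] at h2
      have h3 := Int.floor_mono h2
      rw [Int.floor_add_one] at h3
      omega
    rcases lt_or_gt_of_ne hne with hlt | hlt
    · exact absurd hfe (key b₁ b₂ h₁ h₂ hlt).ne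
    · exact absurd hfe (key b₂ b₁ h₂ h₁ hlt).ne'

lemma claimC (h : Hyp M U) {x t b : ℝ} (hx : 0 < x) (ht0 : 0 ≤ t) (hUt : x < U t)
    (htb : t < b) (hbM : b ∈ M) :
    ∃ b'', b'' ∈ E M x ∧ t < b'' ∧ b'' ≤ b ∧
      Set.Ioo (sSup (M ∩ Set.Icc 0 t)) b'' ∩ M = ∅ ∧
      sSup (M ∩ Set.Icc 0 t) + x < b'' := by
  set a := sSup (M ∩ Set.Icc 0 t) with hadef
  have haM : a ∈ M := g_mem h ht0
  have ha0 : 0 ≤ a := g_nonneg h ht0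
  have hUt' : U t = t - a := by rw [h.hU]
  set K := M ∩ Set.Icc t b with hK
  have hKne : K.Nonempty := ⟨b, hbM, htb.le, le_refl b⟩
  have hKbdd : BddBelow K := ⟨t, fun y hy => hy.2.1⟩
  have hKcl : IsClosed K := h.closed.inter isClosed_Icc
  set b'' := sInf K with hb''
  have hb''K : b'' ∈ K := hKcl.csInf_mem hKne hKbdd
  have htnM : t ∉ M := fun hmem => by
    have := U_eq_zero_of_mem h hmem; linarith
  have htb'' : t < b'' := lt_of_le_of_ne hb''K.2.1 (fun he => htnM (he ▸ hb''K.1))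
  have hax : a + x < b'' := by linarith
  have hgap : Set.Ioo a b'' ∩ M = ∅ := by
    apply Set.eq_empty_of_subset_empty
    rintro m ⟨⟨hm1, hm2⟩, hmM⟩
    rcases le_or_gt m t with hmt | hmt
    · exact absurd (g_ge h ht0 hmM hmt) (not_le.2 hm1)
    · have : m ∈ K := ⟨hmM, hmt.le, le_trans hm2.le hb''K.2.2⟩
      exact absurd (csInf_le hKbdd this) (not_le.2 hm2)
  exact ⟨b'', ⟨hb''K.1, a, haM, ha0, hax, hgap⟩, htb'', hb''K.2.2, hgap, hax⟩

/-- Computation of an `EReal` infimum of the `T`-type, over a set sandwiching the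
interval `(a+x, b)`. -/
lemma T_inf_eq (h : Hyp M U) {x a b : ℝ} (hx : 0 < x) {P : ℝ → Prop}
    (haM : a ∈ M) (hab : a + x < b)
    (hgap : Set.Ioo a b ∩ M = ∅)
    (hlow : ∀ t : ℝ, P t → x < U t → a + x ≤ t)
    (hP : ∀ t : ℝ, a + x < t → t < b → P t) :
    sInf {u : EReal | ∃ t : ℝ, u = (t : EReal) ∧ P t ∧ x < U t} = ((a + x : ℝ) : EReal) := by
  set A : Set EReal := {u : EReal | ∃ t : ℝ, u = (t : EReal) ∧ P t ∧ x < U t} with hA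
  have hsub : ∀ t : ℝ, a + x < t → t < b → (t : EReal) ∈ A := by
    intro t h1 h2
    have hat : a ≤ t := by linarith
    have hgap' : Set.Ioc a t ∩ M = ∅ := by
      apply Set.eq_empty_of_subset_empty
      rintro m ⟨⟨hm1, hm2⟩, hmM⟩
      have : m ∈ Set.Ioo a b ∩ M := ⟨⟨hm1, lt_of_le_of_lt hm2 h2⟩, hmM⟩
      rw [hgap] at this; exact this
    have hUt : U t = t - a := U_eq_of_gap h haM hat hgap'
    exact ⟨t, rfl, hP t h1 h2, by rw [hUt]; linarith⟩
  have hge : ((a + x : ℝ) : EReal) ≤ sInf A := by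
    apply le_sInf
    rintro u ⟨t, rfl, hPt, hUt⟩
    exact EReal.coe_le_coe_iff.2 (hlow t hPt hUt)
  refine le_antisymm ?_ hge
  by_contra hc
  push_neg at hc
  set t₁ := (a + x + b) / 2 with ht₁
  have h₁ : a + x < t₁ := by rw [ht₁]; linarith
  have h₂ : t₁ < b := by rw [ht₁]; linarith
  have hle₁ : sInf A ≤ (t₁ : EReal) := sInf_le (hsub t₁ h₁ h₂)
  have hnetop : sInf A ≠ ⊤ := fun he => by
    rw [he] at hle₁; exact absurd (top_le_iff.1 hle₁) (EReal.coe_ne_top t₁)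
  have hnebot : sInf A ≠ ⊥ := fun he => by
    rw [he] at hc; exact absurd hc (by simp)
  set r := (sInf A).toReal with hr
  have hrr : (r : EReal) = sInf A := EReal.coe_toReal hnetop hnebot
  have har : a + x < r := by
    have := hc; rw [← hrr] at this; exact EReal.coe_lt_coe_iff.1 this
  set t₂ := (a + x + min r b) / 2 with ht₂
  have hmin : a + x < min r b := lt_min har hab
  have h₁' : a + x < t₂ := by rw [ht₂]; linarith
  have h₂' : t₂ < b := by
    have : min r b ≤ b := min_le_right _ _
    rw [ht₂]; linarith
  have h₃' : t₂ < r := by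
    have : min r b ≤ r := min_le_left _ _
    rw [ht₂]; linarith
  have : sInf A ≤ (t₂ : EReal) := sInf_le (hsub t₂ h₁' h₂')
  rw [← hrr] at this
  exact absurd (EReal.coe_le_coe_iff.1 this) (not_le.2 h₃')

/-- Computation of an `EReal` infimum of the `S`-type. -/
lemma S_inf_eq (h : Hyp M U) {c b : ℝ} (hc0 : 0 ≤ c) (hcb : c < b) (hbM : b ∈ M)
    (hgap : Set.Ioo c b ∩ M = ∅) :
    sInf {u : EReal | ∃ t : ℝ, u = (t : EReal) ∧ (c : EReal) < (t : EReal) ∧ U t = 0}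
      = (b : EReal) := by
  apply le_antisymm
  · exact sInf_le ⟨b, rfl, EReal.coe_lt_coe_iff.2 hcb, U_eq_zero_of_mem h hbM⟩
  · apply le_sInf
    rintro u ⟨t, rfl, hct, hUt⟩
    have hct' : c < t := EReal.coe_lt_coe_iff.1 hct
    have htM : t ∈ M := mem_of_U_eq_zero h (le_of_lt (lt_of_le_of_lt hc0 hct')) hUt
    have : b ≤ t := by
      by_contra hbt
      push_neg at hbt
      have : t ∈ Set.Ioo c b ∩ M := ⟨⟨hct', hbt⟩, htM⟩
      rw [hgap] at this; exact this
    exact EReal.coe_le_coe_iff.2 this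

lemma step_lower (h : Hyp M U) {x a b t : ℝ} (hx : 0 < x) (haM : a ∈ M) (ha0 : 0 ≤ a)
    (hab : a + x < b) (hgap : Set.Ioo a b ∩ M = ∅) (hbM : b ∈ M)
    (ht0 : 0 ≤ t) (hUt : x < U t)
    (hno : ∀ e ∈ E M x, t < e → e < b → False) : a + x ≤ t := by
  rcases le_or_gt b t with hbt | htb
  · linarith
  · obtain ⟨b'', hb''E, htb'', hb''b, hgapC, haxC⟩ := claimC h hx ht0 hUt htb hbM
    have hb''eq : b'' = b := by
      rcases lt_or_eq_of_le hb''b with hlt | he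
      · exact absurd (hno b'' hb''E htb'' hlt) (by simp)
      · exact he
    rw [hb''eq] at hgapC haxC
    have ha_eq : a = sSup (M ∩ Set.Icc 0 t) :=
      E_witness_unique (M := M) ⟨haM, ha0, hab, hgap⟩
        ⟨g_mem h ht0, g_nonneg h ht0, haxC, hgapC⟩ hx
    have hUt' : U t = t - a := by rw [h.hU, ← ha_eq]
    linarith

lemma key (h : Hyp M U) {x : ℝ} (hx : 0 < x) (T S : ℝ → ℕ → EReal)
    (hT0 : T x 0 = sInf {u : EReal | ∃ t : ℝ, u = (t : EReal) ∧ 0 ≤ t ∧ x < U t})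
    (hS : ∀ n : ℕ,
      S x n = sInf {u : EReal | ∃ t : ℝ, u = (t : EReal) ∧ T x n < (t : EReal) ∧ U t = 0})
    (hT : ∀ n : ℕ,
      T x (n + 1) = sInf {u : EReal | ∃ t : ℝ, u = (t : EReal) ∧ S x n < (t : EReal) ∧ x < U t}) :
    ∀ n : ℕ, ∀ b ∈ E M x, (E M x ∩ Set.Iio b).ncard = n →
      ∀ a, a ∈ M → 0 ≤ a → a + x < b → Set.Ioo a b ∩ M = ∅ →
        T x n = ((a + x : ℝ) : EReal) ∧ S x n = (b : EReal) := by
  intro n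
  induction n with
  | zero =>
    intro b hbE hcard a haM ha0 hab hgap
    have hempty : E M x ∩ Set.Iio b = ∅ := (Set.ncard_eq_zero (E_finite hx b)).1 hcard
    have hno : ∀ t : ℝ, ∀ e ∈ E M x, t < e → e < b → False := by
      intro t e he _ heb
      have : e ∈ E M x ∩ Set.Iio b := ⟨he, heb⟩
      rw [hempty] at this; exact this
    have hTval : T x 0 = ((a + x : ℝ) : EReal) := by
      rw [hT0]
      exact T_inf_eq h hx haM hab hgap
        (fun t ht hU => step_lower h hx haM ha0 hab hgap hbE.1 ht hU (hno t))
        (fun t h1 _ => by linarith)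
    refine ⟨hTval, ?_⟩
    rw [hS 0, hTval]
    have hgap' : Set.Ioo (a + x) b ∩ M = ∅ := by
      apply Set.eq_empty_of_subset_empty
      rintro m ⟨⟨hm1, hm2⟩, hmM⟩
      have : m ∈ Set.Ioo a b ∩ M := ⟨⟨by linarith, hm2⟩, hmM⟩
      rw [hgap] at this; exact this
    exact S_inf_eq h (by linarith) hab hbE.1 hgap'
  | succ n ih =>
    intro b hbE hcard a haM ha0 hab hgap
    set F := E M x ∩ Set.Iio b with hF
    have hFfin : F.Finite := E_finite hx b
    have hFne : F.Nonempty := by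
      rw [Set.nonempty_iff_ne_empty]
      intro he
      rw [he, Set.ncard_empty] at hcard
      exact Nat.succ_ne_zero n hcard.symm
    set b' := sSup F with hb'
    have hb'F : b' ∈ F := hFne.csSup_mem hFfin
    have hb'E : b' ∈ E M x := hb'F.1
    have hb'b : b' < b := hb'F.2
    have hmax : ∀ e ∈ F, e ≤ b' := fun e he => le_csSup hFfin.bddAbove he
    have hcard' : (E M x ∩ Set.Iio b').ncard = n := by
      have hset : E M x ∩ Set.Iio b' = F \ {b'} := by
        ext e
        simp only [hF, Set.mem_inter_iff, Set.mem_Iio, Set.mem_diff, Set.mem_singleton_iff]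
        constructor
        · rintro ⟨heE, heb⟩
          exact ⟨⟨heE, lt_trans heb hb'b⟩, ne_of_lt heb⟩
        · rintro ⟨⟨heE, heb⟩, hne⟩
          exact ⟨heE, lt_of_le_of_ne (hmax e ⟨heE, heb⟩) hne⟩
      rw [hset, Set.ncard_diff_singleton_of_mem hb'F, hcard]
      omega
    obtain ⟨hb'M, a', ha'M, ha'0, ha'b, hgap'⟩ := hb'E
    obtain ⟨-, hS'⟩ := ih b' ⟨hb'M, a', ha'M, ha'0, ha'b, hgap'⟩ hcard' a' ha'M ha'0 ha'b hgap'
    have hb'a : b' ≤ a := by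
      by_contra hc
      push_neg at hc
      have : b' ∈ Set.Ioo a b ∩ M := ⟨⟨hc, hb'b⟩, hb'M⟩
      rw [hgap] at this; exact this
    have hTval : T x (n + 1) = ((a + x : ℝ) : EReal) := by
      rw [hT n]
      refine T_inf_eq h hx haM hab hgap ?_ ?_
      · intro t hPt hUt
        rw [hS'] at hPt
        have hb't : b' < t := EReal.coe_lt_coe_iff.1 hPt
        have ht0 : 0 ≤ t := le_of_lt (lt_of_le_of_lt (h.subset hb'M) hb't)
        refine step_lower h hx haM ha0 hab hgap hbE.1 ht0 hUt ?_
        intro e heE hte heb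
        exact absurd (hmax e ⟨heE, heb⟩) (not_le.2 (lt_trans hb't hte))
      · intro t h1 h2
        rw [hS']
        exact EReal.coe_lt_coe_iff.2 (by linarith)
    refine ⟨hTval, ?_⟩
    rw [hS (n + 1), hTval]
    have hgap'' : Set.Ioo (a + x) b ∩ M = ∅ := by
      apply Set.eq_empty_of_subset_empty
      rintro m ⟨⟨hm1, hm2⟩, hmM⟩
      have : m ∈ Set.Ioo a b ∩ M := ⟨⟨by linarith, hm2⟩, hmM⟩
      rw [hgap] at this; exact this
    exact S_inf_eq h (by linarith) hab hbE.1 hgap''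

lemma jump_of_S (h : Hyp M U) {x : ℝ} (hx : 0 < x) (T S : ℝ → ℕ → EReal)
    (hT0 : T x 0 = sInf {u : EReal | ∃ t : ℝ, u = (t : EReal) ∧ 0 ≤ t ∧ x < U t})
    (hS : ∀ n : ℕ,
      S x n = sInf {u : EReal | ∃ t : ℝ, u = (t : EReal) ∧ T x n < (t : EReal) ∧ U t = 0})
    (hT : ∀ n : ℕ,
      T x (n + 1) = sInf {u : EReal | ∃ t : ℝ, u = (t : EReal) ∧ S x n < (t : EReal) ∧ x < U t})
    (n : ℕ) (t : ℝ) (ht : (t : EReal) = S x n) :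
    0 < t ∧ U t ≠ Function.leftLim U t := by
  -- nonnegativity of the stopping times
  have hTnn : ∀ m : ℕ, (0 : EReal) ≤ T x m := by
    intro m
    induction m with
    | zero =>
      rw [hT0]
      refine le_sInf ?_
      rintro u ⟨t', rfl, ht', -⟩
      exact EReal.coe_nonneg.2 ht'
    | succ k ihk =>
      have hSk : (0 : EReal) ≤ S x k := by
        rw [hS k]
        refine le_sInf ?_
        rintro u ⟨t', rfl, hlt, -⟩
        exact le_of_lt (lt_of_le_of_lt ihk hlt)
      rw [hT k]
      refine le_sInf ?_
      rintro u ⟨t', rfl, hlt, -⟩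
      exact le_of_lt (lt_of_le_of_lt hSk hlt)
  rw [hS n] at ht
  set A : Set EReal :=
    {u : EReal | ∃ t' : ℝ, u = (t' : EReal) ∧ T x n < (t' : EReal) ∧ U t' = 0} with hA
  rcases Set.eq_empty_or_nonempty A with hAe | hAne
  · rw [hAe, sInf_empty] at ht
    exact absurd ht (EReal.coe_ne_top t)
  obtain ⟨u₀, t₀, rfl, hTt₀, hUt₀⟩ := hAne
  have hTtop : T x n ≠ ⊤ := ne_top_of_lt hTt₀
  have hTbot : T x n ≠ ⊥ := fun he => by
    have := hTnn n
    rw [he, le_bot_iff] at this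
    simp at this
  set c := (T x n).toReal with hcdef
  have hc : (c : EReal) = T x n := EReal.coe_toReal hTtop hTbot
  have hc0 : 0 ≤ c := by
    have := hTnn n
    rw [← hc] at this
    exact EReal.coe_nonneg.1 this
  have hct₀ : c < t₀ := EReal.coe_lt_coe_iff.1 (hc ▸ hTt₀)
  -- `t` is a lower bound argument
  have hlbA : ∀ m : ℝ, c < m → U m = 0 → t ≤ m := by
    intro m h1 h2
    have : sInf A ≤ (m : EReal) := sInf_le ⟨m, rfl, hc ▸ EReal.coe_lt_coe_iff.2 h1, h2⟩
    rw [← ht] at this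
    exact EReal.coe_le_coe_iff.1 this
  have hctle : c ≤ t := by
    have h1 : (c : EReal) ≤ sInf A := by
      refine le_sInf ?_
      rintro u ⟨t', rfl, hlt, -⟩
      exact le_of_lt (hc ▸ hlt)
    rw [← ht] at h1
    exact EReal.coe_le_coe_iff.1 h1
  -- t belongs to M
  have htM : t ∈ M := by
    have hglb : IsGLB (M ∩ Set.Ioi c) t := by
      constructor
      · intro m hm
        exact hlbA m hm.2 (U_eq_zero_of_mem h hm.1)
      · intro d hd
        have h1 : (d : EReal) ≤ sInf A := by
          refine le_sInf ?_
          rintro u ⟨t', rfl, hlt, hU0⟩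
          have hct' : c < t' := EReal.coe_lt_coe_iff.1 (hc ▸ hlt)
          have ht'M : t' ∈ M := mem_of_U_eq_zero h (le_of_lt (lt_of_le_of_lt hc0 hct')) hU0
          exact EReal.coe_le_coe_iff.2 (hd ⟨ht'M, hct'⟩)
        rw [← ht] at h1
        exact EReal.coe_le_coe_iff.1 h1
    have ht₀M : t₀ ∈ M := mem_of_U_eq_zero h (le_of_lt (lt_of_le_of_lt hc0 hct₀)) hUt₀
    have hclos : t ∈ closure (M ∩ Set.Ioi c) := hglb.mem_closure ⟨t₀, ht₀M, hct₀⟩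
    have := closure_mono (Set.inter_subset_left (s := M) (t := Set.Ioi c)) hclos
    rwa [h.closed.closure_eq] at this
  -- t is strictly bigger than c
  have hctlt : c < t := by
    rcases lt_or_eq_of_le hctle with hlt | he
    · exact hlt
    exfalso
    have hcM : c ∈ M := he ▸ htM
    -- get the defining set of `T x n` and extract an element close to `c`
    have hprop : ∃ B : Set EReal, T x n = sInf B ∧
        ∀ u ∈ B, ∃ t' : ℝ, u = (t' : EReal) ∧ x < U t' := by
      cases n with
      | zero =>
        exact ⟨_, hT0, by rintro u ⟨t', rfl, -, hu⟩; exact ⟨t', rfl, hu⟩⟩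
      | succ k =>
        exact ⟨_, hT k, by rintro u ⟨t', rfl, -, hu⟩; exact ⟨t', rfl, hu⟩⟩
    obtain ⟨B, hB, hBprop⟩ := hprop
    have hlt2 : sInf B < ((c + x : ℝ) : EReal) := by
      rw [← hB, ← hc]
      exact EReal.coe_lt_coe_iff.2 (by linarith)
    obtain ⟨u, huB, hult⟩ := sInf_lt_iff.1 hlt2
    obtain ⟨t', rfl, hUt'⟩ := hBprop u huB
    have ht'lt : t' < c + x := EReal.coe_lt_coe_iff.1 hult
    have hct' : c ≤ t' := by
      have : sInf B ≤ (t' : EReal) := sInf_le huB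
      rw [← hB, ← hc] at this
      exact EReal.coe_le_coe_iff.1 this
    have ht'0 : 0 ≤ t' := le_trans hc0 hct'
    have : U t' ≤ t' - c := U_le h ht'0 hcM hct'
    linarith
  -- the gap
  have hgap : Set.Ioo c t ∩ M = ∅ := by
    apply Set.eq_empty_of_subset_empty
    rintro m ⟨⟨hm1, hm2⟩, hmM⟩
    exact absurd (hlbA m hm1 (U_eq_zero_of_mem h hmM)) (not_le.2 hm2)
  exact jump_of_gap h htM c hc0 hctlt hgap

end JumpAux

open JumpAux in
/-- The jump times of the age process `U_t = t - sup (M ∩ [0,t])` are exhausted by the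
countable family of times `S_n^x` for rational `x > 0`, where
`T_1^x = inf{t : U_t > x}`, `S_n^x = inf{t > T_n^x : U_t = 0}` and
`T_{n+1}^x = inf{t > S_n^x : U_t > x}` (infima taken in the extended reals, so that
`inf ∅ = +∞`).  Here `M = {t ≥ 0 : f t ∈ L} ∪ {0}` is assumed to be a perfect set
with empty interior, `L` a finite set containing at least one value attained by `f`. -/
theorem jump_times_exhausted
    (f : ℝ → ℝ) (hf : Continuous f) (L : Set ℝ) (hL : L.Finite)
    (hattain : ∃ t : ℝ, 0 ≤ t ∧ f t ∈ L)
    (M : Set ℝ) (hM : M = {t : ℝ | 0 ≤ t ∧ f t ∈ L} ∪ {0})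
    (hperfect : ∀ t ∈ M, t ∈ closure (M \ {t}))
    (hnowhere : interior M = ∅)
    (U : ℝ → ℝ) (hU : ∀ t : ℝ, U t = t - sSup (M ∩ Set.Icc 0 t))
    (T S : ℝ → ℕ → EReal)
    (hT0 : ∀ x : ℝ, T x 0 = sInf {u : EReal | ∃ t : ℝ, u = (t : EReal) ∧ 0 ≤ t ∧ x < U t})
    (hS : ∀ (x : ℝ) (n : ℕ),
      S x n = sInf {u : EReal | ∃ t : ℝ, u = (t : EReal) ∧ T x n < (t : EReal) ∧ U t = 0})
    (hT : ∀ (x : ℝ) (n : ℕ),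
      T x (n + 1) = sInf {u : EReal | ∃ t : ℝ, u = (t : EReal) ∧ S x n < (t : EReal) ∧ x < U t}) :
    ∀ t : ℝ, (0 < t ∧ U t ≠ Function.leftLim U t) ↔
      ∃ q : ℚ, 0 < q ∧ ∃ n : ℕ, (t : EReal) = S (q : ℝ) n := by
  have hyp : Hyp M U := by
    constructor
    · rw [hM]
      have : {t : ℝ | 0 ≤ t ∧ f t ∈ L} = Set.Ici 0 ∩ f ⁻¹' L := by
        ext t; simp [Set.mem_Ici, and_comm]
      rw [this]
      exact ((isClosed_Ici.inter (hL.isClosed.preimage hf)).union isClosed_singleton)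
    · rw [hM]; exact Or.inr rfl
    · rw [hM]
      rintro t (⟨h1, -⟩ | h1)
      · exact h1
      · rw [Set.mem_singleton_iff.1 h1]; exact Set.mem_Ici.2 (le_refl 0)
    · exact hU
  intro t
  constructor
  · rintro ⟨htpos, hjump⟩
    obtain ⟨htM, a, haM, ha0, hat, hgap⟩ := gap_of_jump hyp htpos hjump
    obtain ⟨q, hq1, hq2⟩ := exists_rat_btwn (show (0 : ℝ) < t - a by linarith)
    have hqpos : 0 < q := by exact_mod_cast hq1
    have hqR : (0 : ℝ) < (q : ℝ) := hq1
    have hbE : t ∈ E M (q : ℝ) := ⟨htM, a, haM, ha0, by linarith, hgap⟩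
    obtain ⟨-, hSval⟩ := key hyp hqR T S (hT0 (q : ℝ)) (hS (q : ℝ)) (hT (q : ℝ))
      ((E M (q : ℝ) ∩ Set.Iio t).ncard) t hbE rfl a haM ha0 (by linarith) hgap
    exact ⟨q, hqpos, (E M (q : ℝ) ∩ Set.Iio t).ncard, hSval.symm⟩
  · rintro ⟨q, hq, n, ht⟩
    have hqR : (0 : ℝ) < (q : ℝ) := by exact_mod_cast hq
    exact jump_of_S hyp hqR T S (hT0 (q : ℝ)) (hS (q : ℝ)) (hT (q : ℝ)) n t ht
end

section
/- Suppose F_1 and F_2 are two measures on (0,∞] with finite values of ∫ (1 − e^{−λx}) F_i(dx) for all λ > 0, and suppose their Laplace exponents agree: ∫ (1 − e^{−λx}) F_1(dx) = ∫ (1 − e^{−λx}) F_2(dx) for all λ > 0. Then F_1 = F_2 on (0,∞]. -/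
open Set MeasureTheory
open scoped ENNReal

namespace LevyAux

lemma ae_pos {F : Measure ℝ} (hsupp : F (Set.Iic (0:ℝ)) = 0) : ∀ᵐ u ∂F, 0 < u := by
  rw [ae_iff]
  refine measure_mono_null ?_ hsupp
  intro u hu
  simpa [Set.mem_Iic] using not_lt.mp hu

lemma integrable_of_ae_Icc {μ : Measure ℝ} [IsFiniteMeasure μ]
    (hμ : μ (Set.Icc (0:ℝ) 1)ᶜ = 0) {g : ℝ → ℝ} (hg : Continuous g) :
    Integrable g μ := by
  obtain ⟨C, hC⟩ := isCompact_Icc.exists_bound_of_continuousOn hg.continuousOn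
  have hae : ∀ᵐ t ∂μ, t ∈ Set.Icc (0:ℝ) 1 := by
    rw [ae_iff]
    convert hμ using 2
    rfl
  refine (integrable_const C).mono' hg.aestronglyMeasurable ?_
  filter_upwards [hae] with t ht using hC t ht

/-- Two finite measures concentrated on `[0,1]` with equal moments are equal. -/
lemma ext_of_moments (μ ν : Measure ℝ) [IsFiniteMeasure μ] [IsFiniteMeasure ν]
    (hμ : μ (Set.Icc (0:ℝ) 1)ᶜ = 0) (hν : ν (Set.Icc (0:ℝ) 1)ᶜ = 0)
    (h : ∀ n : ℕ, (∫ t, t ^ n ∂μ) = ∫ t, t ^ n ∂ν) : μ = ν := by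
  have haeμ : ∀ᵐ t ∂μ, t ∈ Set.Icc (0:ℝ) 1 := by
    rw [ae_iff]; convert hμ using 2; rfl
  have haeν : ∀ᵐ t ∂ν, t ∈ Set.Icc (0:ℝ) 1 := by
    rw [ae_iff]; convert hν using 2; rfl
  have hpoly : ∀ p : Polynomial ℝ, (∫ t, p.eval t ∂μ) = ∫ t, p.eval t ∂ν := by
    intro p
    have hev : ∀ t : ℝ, p.eval t
        = ∑ i ∈ Finset.range (p.natDegree + 1), p.coeff i * t ^ i := by
      intro t
      rw [Polynomial.eval_eq_sum_range]
    simp_rw [hev]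
    rw [integral_finset_sum _ (fun i _ =>
        (integrable_of_ae_Icc hμ (continuous_pow i)).const_mul _),
      integral_finset_sum _ (fun i _ =>
        (integrable_of_ae_Icc hν (continuous_pow i)).const_mul _)]
    exact Finset.sum_congr rfl fun i _ => by
      rw [integral_const_mul, integral_const_mul, h i]
  have hcont : ∀ g : ℝ → ℝ, Continuous g → (∫ t, g t ∂μ) = ∫ t, g t ∂ν := by
    intro g hg
    set A := ∫ t, g t ∂μ with hA
    set B := ∫ t, g t ∂ν with hB
    set K := (μ Set.univ).toReal + (ν Set.univ).toReal with hK
    have hK0 : 0 ≤ K := by positivity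
    have key : ∀ ε : ℝ, 0 < ε → |A - B| ≤ ε * K := by
      intro ε hε
      obtain ⟨p, hp⟩ := exists_polynomial_near_of_continuousOn 0 1 g hg.continuousOn ε hε
      have hgiμ : Integrable g μ := integrable_of_ae_Icc hμ hg
      have hgiν : Integrable g ν := integrable_of_ae_Icc hν hg
      have hpiμ : Integrable (fun t => p.eval t) μ :=
        integrable_of_ae_Icc hμ p.continuous_aeval
      have hpiν : Integrable (fun t => p.eval t) ν :=
        integrable_of_ae_Icc hν p.continuous_aeval
      have h1 : ‖∫ t, (g t - p.eval t) ∂μ‖ ≤ ε * (μ Set.univ).toReal := by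
        refine norm_integral_le_of_norm_le_const ?_
        filter_upwards [haeμ] with t ht
        have := hp t ht
        rw [Real.norm_eq_abs, abs_sub_comm]
        exact le_of_lt this
      have h2 : ‖∫ t, (g t - p.eval t) ∂ν‖ ≤ ε * (ν Set.univ).toReal := by
        refine norm_integral_le_of_norm_le_const ?_
        filter_upwards [haeν] with t ht
        have := hp t ht
        rw [Real.norm_eq_abs, abs_sub_comm]
        exact le_of_lt this
      rw [integral_sub hgiμ hpiμ] at h1
      rw [integral_sub hgiν hpiν] at h2
      rw [Real.norm_eq_abs] at h1 h2
      have hP := hpoly p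
      rw [hK, mul_add]
      calc |A - B| = |(A - ∫ t, p.eval t ∂μ) - (B - ∫ t, p.eval t ∂ν)| := by
            rw [hP]; ring_nf
        _ ≤ |A - ∫ t, p.eval t ∂μ| + |B - ∫ t, p.eval t ∂ν| := abs_sub _ _
        _ ≤ ε * (μ Set.univ).toReal + ε * (ν Set.univ).toReal := add_le_add h1 h2
    by_contra hne
    have habs : 0 < |A - B| := by
      rw [abs_pos, sub_ne_zero]; exact hne
    have hεpos : 0 < |A - B| / (2 * (K + 1)) := by positivity
    have := key _ hεpos
    rw [div_mul_eq_mul_div, le_div_iff₀ (by positivity)] at this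
    nlinarith
  refine ext_of_forall_lintegral_eq_of_IsFiniteMeasure ?_
  intro f
  have hgc : Continuous fun t : ℝ => (f t : ℝ) := NNReal.continuous_coe.comp f.continuous
  rw [lintegral_coe_eq_integral f (integrable_of_ae_Icc hμ hgc),
    lintegral_coe_eq_integral f (integrable_of_ae_Icc hν hgc), hcont _ hgc]

lemma Iψ_lt_top {F : Measure ℝ} (hsupp : F (Set.Iic (0:ℝ)) = 0)
    (hlevy : ∫⁻ u, ENNReal.ofReal (min 1 u) ∂F < ⊤) {l : ℝ} (hl : 0 < l) :
    ∫⁻ u, ENNReal.ofReal (1 - Real.exp (-(l * u))) ∂F < ⊤ := by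
  calc ∫⁻ u, ENNReal.ofReal (1 - Real.exp (-(l * u))) ∂F
      ≤ ∫⁻ u, ENNReal.ofReal (max 1 l) * ENNReal.ofReal (min 1 u) ∂F := by
        refine lintegral_mono_ae ?_
        filter_upwards [ae_pos hsupp] with u hu
        rw [← ENNReal.ofReal_mul (le_trans zero_le_one (le_max_left 1 l))]
        refine ENNReal.ofReal_le_ofReal ?_
        rcases le_total u 1 with h1 | h1
        · rw [min_eq_right h1]
          nlinarith [Real.add_one_le_exp (-(l * u)), le_max_right 1 l, le_max_left 1 l]
        · rw [min_eq_left h1]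
          nlinarith [Real.exp_pos (-(l * u)), le_max_left 1 l]
    _ = ENNReal.ofReal (max 1 l) * ∫⁻ u, ENNReal.ofReal (min 1 u) ∂F := by
        exact lintegral_const_mul _ ((continuous_const.min continuous_id).measurable.ennreal_ofReal)
    _ < ⊤ := ENNReal.mul_lt_top ENNReal.ofReal_lt_top hlevy

lemma lint_add {F : Measure ℝ} (hsupp : F (Set.Iic (0:ℝ)) = 0) {a b : ℝ}
    (ha : 0 < a) (hab : a ≤ b) :
    (∫⁻ u, ENNReal.ofReal (Real.exp (-(a * u)) - Real.exp (-(b * u))) ∂F)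
      + ∫⁻ u, ENNReal.ofReal (1 - Real.exp (-(a * u))) ∂F
    = ∫⁻ u, ENNReal.ofReal (1 - Real.exp (-(b * u))) ∂F := by
  have hm : Measurable fun u => ENNReal.ofReal (Real.exp (-(a * u)) - Real.exp (-(b * u))) :=
    (((Real.continuous_exp.comp (continuous_const.mul continuous_id).neg).sub
      (Real.continuous_exp.comp (continuous_const.mul continuous_id).neg)).measurable).ennreal_ofReal
  rw [← lintegral_add_left hm]
  refine lintegral_congr_ae ?_
  filter_upwards [ae_pos hsupp] with u hu
  rw [← ENNReal.ofReal_add ?_ ?_]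
  · congr 1; ring
  · rw [sub_nonneg]
    exact Real.exp_le_exp.mpr (by nlinarith)
  · rw [sub_nonneg]
    exact Real.exp_le_one_iff.mpr (by nlinarith)

end LevyAux

/-- Uniqueness of the Laplace exponent: two Lévy measures on `(0,∞]` (modelled as
σ-finite measures `F₁, F₂` on `(0,∞)` together with masses `c₁, c₂` at `+∞`) with
`∫ (1 ∧ u) dFᵢ < ∞`, whose Laplace exponents
`ψᵢ(λ) = ∫ (1 - e^{-λ u}) dFᵢ(u) + cᵢ` agree for all `λ > 0`, are equal. -/
theorem levy_measure_unique_from_laplace_exponent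
    (F₁ F₂ : Measure ℝ) [SigmaFinite F₁] [SigmaFinite F₂]
    (hsupp₁ : F₁ (Set.Iic (0:ℝ)) = 0) (hsupp₂ : F₂ (Set.Iic (0:ℝ)) = 0)
    (hlevy₁ : ∫⁻ u, ENNReal.ofReal (min 1 u) ∂F₁ < ⊤)
    (hlevy₂ : ∫⁻ u, ENNReal.ofReal (min 1 u) ∂F₂ < ⊤)
    (c₁ c₂ : ℝ≥0∞) (hc₁ : c₁ ≠ ⊤) (hc₂ : c₂ ≠ ⊤)
    (hψ : ∀ l : ℝ, 0 < l →
      (∫⁻ u, ENNReal.ofReal (1 - Real.exp (-(l * u))) ∂F₁) + c₁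
        = (∫⁻ u, ENNReal.ofReal (1 - Real.exp (-(l * u))) ∂F₂) + c₂) :
    F₁ = F₂ ∧ c₁ = c₂ := by
  classical
  set ρ : ℝ → ℝ≥0∞ := fun u => ENNReal.ofReal (Real.exp (-(1 * u)) - Real.exp (-(2 * u)))
    with hρdef
  have hρmeas : Measurable ρ :=
    (((Real.continuous_exp.comp (continuous_const.mul continuous_id).neg).sub
      (Real.continuous_exp.comp (continuous_const.mul continuous_id).neg)).measurable).ennreal_ofReal
  set μ₁ := F₁.withDensity ρ with hμ₁def
  set μ₂ := F₂.withDensity ρ with hμ₂def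
  -- the measures μᵢ are finite
  have hρint : ∀ (F : Measure ℝ), F (Set.Iic (0:ℝ)) = 0 →
      (∫⁻ u, ENNReal.ofReal (min 1 u) ∂F < ⊤) → ∫⁻ u, ρ u ∂F < ⊤ := by
    intro F hs hl
    have h2 := LevyAux.lint_add hs one_pos one_le_two
    have hle : (∫⁻ u, ρ u ∂F) ≤ ∫⁻ u, ENNReal.ofReal (1 - Real.exp (-(2 * u))) ∂F := by
      rw [← h2]; exact le_self_add
    exact lt_of_le_of_lt hle (LevyAux.Iψ_lt_top hs hl two_pos)
  have hμ₁fin : IsFiniteMeasure μ₁ := by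
    constructor
    rw [hμ₁def, withDensity_apply _ MeasurableSet.univ, setLIntegral_univ]
    exact hρint F₁ hsupp₁ hlevy₁
  have hμ₂fin : IsFiniteMeasure μ₂ := by
    constructor
    rw [hμ₂def, withDensity_apply _ MeasurableSet.univ, setLIntegral_univ]
    exact hρint F₂ hsupp₂ hlevy₂
  have hμ₁null : μ₁ (Set.Iic (0:ℝ)) = 0 := by
    rw [hμ₁def, withDensity_apply _ measurableSet_Iic]
    exact setLIntegral_measure_zero _ _ hsupp₁
  have hμ₂null : μ₂ (Set.Iic (0:ℝ)) = 0 := by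
    rw [hμ₂def, withDensity_apply _ measurableSet_Iic]
    exact setLIntegral_measure_zero _ _ hsupp₂
  -- equality of the "moments" at the level of F
  have hmomF : ∀ n : ℕ,
      (∫⁻ u, ENNReal.ofReal (Real.exp (-(((n:ℝ)+1) * u)) - Real.exp (-(((n:ℝ)+2) * u))) ∂F₁)
      = ∫⁻ u, ENNReal.ofReal (Real.exp (-(((n:ℝ)+1) * u)) - Real.exp (-(((n:ℝ)+2) * u))) ∂F₂ := by
    intro n
    have ha : (0:ℝ) < (n:ℝ) + 1 := by positivity
    have hb : (0:ℝ) < (n:ℝ) + 2 := by positivity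
    have hab : (n:ℝ) + 1 ≤ (n:ℝ) + 2 := by linarith
    have e₁ := LevyAux.lint_add hsupp₁ ha hab
    have e₂ := LevyAux.lint_add hsupp₂ ha hab
    have hψa := hψ _ ha
    have hψb := hψ _ hb
    have hfinite : (∫⁻ u, ENNReal.ofReal (1 - Real.exp (-(((n:ℝ)+1) * u))) ∂F₁) + c₁ ≠ ⊤ :=
      ENNReal.add_ne_top.mpr ⟨(LevyAux.Iψ_lt_top hsupp₁ hlevy₁ ha).ne, hc₁⟩
    refine WithTop.add_right_cancel hfinite ?_
    calc (∫⁻ u, ENNReal.ofReal (Real.exp (-(((n:ℝ)+1) * u))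
            - Real.exp (-(((n:ℝ)+2) * u))) ∂F₁)
          + ((∫⁻ u, ENNReal.ofReal (1 - Real.exp (-(((n:ℝ)+1) * u))) ∂F₁) + c₁)
        = ((∫⁻ u, ENNReal.ofReal (1 - Real.exp (-(((n:ℝ)+2) * u))) ∂F₁) + c₁) := by
          rw [← add_assoc, e₁]
      _ = ((∫⁻ u, ENNReal.ofReal (1 - Real.exp (-(((n:ℝ)+2) * u))) ∂F₂) + c₂) := hψb
      _ = (∫⁻ u, ENNReal.ofReal (Real.exp (-(((n:ℝ)+1) * u))
            - Real.exp (-(((n:ℝ)+2) * u))) ∂F₂)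
          + ((∫⁻ u, ENNReal.ofReal (1 - Real.exp (-(((n:ℝ)+1) * u))) ∂F₂) + c₂) := by
          rw [← add_assoc, e₂]
      _ = (∫⁻ u, ENNReal.ofReal (Real.exp (-(((n:ℝ)+1) * u))
            - Real.exp (-(((n:ℝ)+2) * u))) ∂F₂)
          + ((∫⁻ u, ENNReal.ofReal (1 - Real.exp (-(((n:ℝ)+1) * u))) ∂F₁) + c₁) := by
          rw [hψa]
  -- moments of μᵢ
  have hmomμ : ∀ (F : Measure ℝ) (n : ℕ),
      (∫⁻ u, ENNReal.ofReal (Real.exp (-u) ^ n) ∂(F.withDensity ρ))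
      = ∫⁻ u, ENNReal.ofReal (Real.exp (-(((n:ℝ)+1) * u)) - Real.exp (-(((n:ℝ)+2) * u))) ∂F := by
    intro F n
    have hm : Measurable fun u : ℝ => ENNReal.ofReal (Real.exp (-u) ^ n) :=
      (((Real.continuous_exp.comp continuous_neg).pow n).measurable).ennreal_ofReal
    rw [lintegral_withDensity_eq_lintegral_mul F hρmeas hm]
    refine lintegral_congr fun u => ?_
    show ρ u * ENNReal.ofReal (Real.exp (-u) ^ n) = _
    rw [hρdef, mul_comm, ← ENNReal.ofReal_mul (by positivity)]
    congr 1
    rw [← Real.exp_nat_mul]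
    rw [mul_sub, ← Real.exp_add, ← Real.exp_add]
    congr 1 <;> (congr 1; push_cast; ring)
  -- the pushforward measures under u ↦ exp (-u)
  set φ : ℝ → ℝ := fun u => Real.exp (-u) with hφdef
  have hφcont : Continuous φ := Real.continuous_exp.comp continuous_neg
  have hφinj : Function.Injective φ := fun a b hab => by
    have := Real.exp_injective hab
    linarith [neg_injective this]
  have hφemb : MeasurableEmbedding φ := hφcont.measurableEmbedding hφinj
  set ν₁ := μ₁.map φ with hν₁def
  set ν₂ := μ₂.map φ with hν₂def
  have hν₁fin : IsFiniteMeasure ν₁ := by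
    constructor
    rw [hν₁def, Measure.map_apply hφcont.measurable MeasurableSet.univ]
    exact measure_lt_top _ _
  have hν₂fin : IsFiniteMeasure ν₂ := by
    constructor
    rw [hν₂def, Measure.map_apply hφcont.measurable MeasurableSet.univ]
    exact measure_lt_top _ _
  have hpre : ∀ (μ : Measure ℝ), μ (Set.Iic (0:ℝ)) = 0 →
      (μ.map φ) (Set.Icc (0:ℝ) 1)ᶜ = 0 := by
    intro μ hμ
    rw [Measure.map_apply hφcont.measurable (measurableSet_Icc.compl)]
    refine measure_mono_null ?_ hμ
    intro u hu
    simp only [Set.mem_preimage, Set.mem_compl_iff, Set.mem_Icc, not_and_or, not_le] at hu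
    rcases hu with hu | hu
    · exact absurd (Real.exp_pos (-u)).le (not_le.mpr hu)
    · have : -u > 0 := by
        by_contra hc
        exact absurd (Real.exp_le_one_iff.mpr (not_lt.mp hc)) (not_le.mpr hu)
      simp only [Set.mem_Iic]
      linarith
  -- moments of νᵢ agree
  have hmomν : ∀ n : ℕ, (∫ t, t ^ n ∂ν₁) = ∫ t, t ^ n ∂ν₂ := by
    intro n
    have haemeas : ∀ (μ : Measure ℝ), AEStronglyMeasurable (fun t : ℝ => t ^ n) (μ.map φ) :=
      fun μ => (continuous_pow n).aestronglyMeasurable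
    rw [hν₁def, hν₂def, integral_map hφcont.measurable.aemeasurable (haemeas μ₁),
      integral_map hφcont.measurable.aemeasurable (haemeas μ₂)]
    have hint : ∀ (μ : Measure ℝ), (∫ u, φ u ^ n ∂μ)
        = (∫⁻ u, ENNReal.ofReal (Real.exp (-u) ^ n) ∂μ).toReal := by
      intro μ
      rw [integral_eq_lintegral_of_nonneg_ae (f := fun u => φ u ^ n) (Filter.Eventually.of_forall fun u => pow_nonneg (Real.exp_pos _).le _)
        ((hφcont.pow n).aestronglyMeasurable)]
    rw [hint μ₁, hint μ₂, hμ₁def, hμ₂def, hmomμ F₁ n, hmomμ F₂ n, hmomF n]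
  -- conclude ν₁ = ν₂, then μ₁ = μ₂
  have hν : ν₁ = ν₂ :=
    LevyAux.ext_of_moments ν₁ ν₂ (hpre μ₁ hμ₁null) (hpre μ₂ hμ₂null) hmomν
  have hμ : μ₁ = μ₂ := by
    have h1 := hφemb.comap_map μ₁
    have h2 := hφemb.comap_map μ₂
    rw [← h1, ← h2, ← hν₁def, ← hν₂def, hν]
  -- recover F from μ
  have hrec : ∀ (F : Measure ℝ), F (Set.Iic (0:ℝ)) = 0 →
      (F.withDensity ρ).withDensity (fun u => (ρ u)⁻¹) = F := by
    intro F hs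
    rw [← withDensity_mul F (g := fun u => (ρ u)⁻¹) hρmeas hρmeas.inv]
    have : (ρ * fun u => (ρ u)⁻¹) =ᵐ[F] 1 := by
      filter_upwards [LevyAux.ae_pos hs] with u hu
      have hρne : ρ u ≠ 0 := by
        rw [hρdef]
        simp only [ne_eq, ENNReal.ofReal_eq_zero, not_le, sub_pos]
        exact Real.exp_lt_exp.mpr (by nlinarith)
      have hρnetop : ρ u ≠ ⊤ := ENNReal.ofReal_ne_top
      show ρ u * (ρ u)⁻¹ = 1
      exact ENNReal.mul_inv_cancel hρne hρnetop
    rw [withDensity_congr_ae this, withDensity_one]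
  have hF : F₁ = F₂ := by
    rw [← hrec F₁ hsupp₁, ← hrec F₂ hsupp₂, ← hμ₁def, ← hμ₂def, hμ]
  refine ⟨hF, ?_⟩
  have h1 := hψ 1 one_pos
  rw [hF] at h1
  exact (ENNReal.add_right_inj (LevyAux.Iψ_lt_top hsupp₂ hlevy₂ one_pos).ne).mp h1
end
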